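/- Let 1 < p, q < ∞ with 1/p + 1/q = 1. A linear functional f on bv_p is continuous if and only if there exists a = (a_k)_{k≥1} ∈ l_q such that f(x) = ∑_{k=1}^∞ a_k (x_k − x_{k−1}) for all x ∈ bv_p (with x_0 = 0). -/

import Mathlib

noncomputable section

open Filter Topology
open scoped ENNReal

/-- The difference operator: sequences indexed from `0`, representing `(x_k)_{k ≥ 1}`
(so index `n : ℕ` stands for `x_{n+1}`), with the convention `x_0 = 0`. -/
def delta (x : ℕ → ℂ) : ℕ → ℂ := fun n => x n - if n = 0 then 0 else x (n - 1)

/-- The difference operator as a linear equivalence of the space of all sequences,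
with inverse given by partial sums. -/
def deltaL : (ℕ → ℂ) ≃ₗ[ℂ] (ℕ → ℂ) where
  toFun := delta
  invFun y := fun n => ∑ i ∈ Finset.range (n + 1), y i
  map_add' x y := by
    funext n
    simp only [delta, Pi.add_apply]
    split <;> ring
  map_smul' c x := by
    funext n
    simp only [delta, Pi.smul_apply, smul_eq_mul, RingHom.id_apply]
    split <;> ring
  left_inv x := by
    funext n
    induction n with
    | zero => simp [delta]
    | succ k ih =>
      show (∑ i ∈ Finset.range (k + 1 + 1), delta x i) = x (k + 1)
      rw [Finset.sum_range_succ]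
      have ih' : (∑ i ∈ Finset.range (k + 1), delta x i) = x k := ih
      rw [ih']
      simp [delta]
  right_inv y := by
    funext n
    show delta (fun n => ∑ i ∈ Finset.range (n + 1), y i) n = y n
    cases n with
    | zero => simp [delta]
    | succ k => simp [delta, Finset.sum_range_succ]

/-- The space `bv_p`, as a submodule of the space of all complex sequences:
`x ∈ bv_p` iff `Δx ∈ ℓ^p`. -/
def bvSubmodule (p : ℝ≥0∞) : Submodule ℂ (ℕ → ℂ) where
  carrier := {x | Memℓp (delta x) p}
  add_mem' {x y} hx hy := by
    have : delta (x + y) = delta x + delta y := map_add deltaL x y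
    simpa [Set.mem_setOf_eq, this] using hx.add hy
  zero_mem' := by
    have : delta (0 : ℕ → ℂ) = 0 := map_zero deltaL
    simp [Set.mem_setOf_eq, this]
    exact zero_memℓp
  smul_mem' c x hx := by
    have : delta (c • x) = c • delta x := map_smul deltaL c x
    simpa [Set.mem_setOf_eq, this] using hx.const_smul c

/-- The space `bv_p` as a type.  (A `def`, not an `abbrev`, so that it does not pick up
the product topology of the ambient sequence space.) -/
def bv (p : ℝ≥0∞) : Type := ↥(bvSubmodule p)

namespace bv

instance (p : ℝ≥0∞) : AddCommGroup (bv p) :=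
  inferInstanceAs (AddCommGroup ↥(bvSubmodule p))

instance (p : ℝ≥0∞) : Module ℂ (bv p) :=
  inferInstanceAs (Module ℂ ↥(bvSubmodule p))

/-- The underlying sequence of an element of `bv_p`. -/
def seq {p : ℝ≥0∞} (x : bv p) : ℕ → ℂ := Subtype.val (x : ↥(bvSubmodule p))

lemma memℓp_delta {p : ℝ≥0∞} (x : bv p) : Memℓp (delta (seq x)) p :=
  (x : ↥(bvSubmodule p)).2

/-- The difference operator, as a linear map from `bv_p` to `ℓ^p`. -/
def toLp (p : ℝ≥0∞) : bv p →ₗ[ℂ] lp (fun _ : ℕ => ℂ) p where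
  toFun x := ⟨delta (seq x), memℓp_delta x⟩
  map_add' x y := by
    ext n
    have : delta (seq x + seq y) = delta (seq x) + delta (seq y) := map_add deltaL _ _
    change delta (seq (x + y)) n = _
    have hseq : seq (x + y) = seq x + seq y := rfl
    rw [hseq, this]
    rfl
  map_smul' c x := by
    ext n
    have : delta (c • seq x) = c • delta (seq x) := map_smul deltaL c _
    change delta (seq (c • x)) n = _
    have hseq : seq (c • x) = c • seq x := rfl
    rw [hseq, this]
    rfl

lemma toLp_injective (p : ℝ≥0∞) : Function.Injective (toLp p) := by
  intro x y h
  have h' : delta (seq x) = delta (seq y) := by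
    have := congrArg (Subtype.val) h
    exact this
  have : seq x = seq y := deltaL.injective h'
  exact Subtype.ext this

noncomputable instance (p : ℝ≥0∞) [Fact (1 ≤ p)] : NormedAddCommGroup (bv p) :=
  NormedAddCommGroup.induced (bv p) (lp (fun _ : ℕ => ℂ) p) (toLp p) (toLp_injective p)

noncomputable instance (p : ℝ≥0∞) [Fact (1 ≤ p)] : NormedSpace ℂ (bv p) :=
  NormedSpace.induced ℂ (bv p) (lp (fun _ : ℕ => ℂ) p) (toLp p)

end bv

/-- The sequence `b^{(k+1)}`: `1` from position `k` on (positions indexed from `0`). -/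
def bSeq (k : ℕ) : ℕ → ℂ := fun n => if k ≤ n then 1 else 0

/-- The sequence `e^{(k+1)}`: `1` exactly at position `k`. -/
def eSeq (k : ℕ) : ℕ → ℂ := fun n => if n = k then 1 else 0

lemma memℓp_eSeq (p : ℝ≥0∞) [Fact (1 ≤ p)] (k : ℕ) : Memℓp (eSeq k) p := by
  rcases eq_or_ne p ∞ with rfl | hp
  · apply memℓp_infty
    apply Set.Finite.bddAbove
    apply Set.Finite.subset (Set.finite_singleton (0:ℝ) |>.insert 1)
    rintro r ⟨n, rfl⟩
    simp only [eSeq]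
    split <;> simp
  · apply memℓp_gen
    apply summable_of_ne_finset_zero (s := {k})
    intro n hn
    simp only [Finset.mem_singleton] at hn
    simp only [eSeq, if_neg hn, norm_zero]
    have hp0 : 0 < p.toReal := by
      have h1 : (1 : ℝ≥0∞) ≤ p := Fact.out
      exact ENNReal.toReal_pos (by intro h; rw [h] at h1; simp at h1) hp
    exact Real.zero_rpow hp0.ne'

lemma delta_bSeq (k : ℕ) : delta (bSeq k) = eSeq k := by
  funext n
  rcases n with _ | m <;>
    simp only [delta, bSeq, eSeq, Nat.add_sub_cancel, Nat.succ_ne_zero, if_false, reduceIte,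
      sub_zero] <;>
    split_ifs <;> first | omega | (exfalso; omega) | (norm_num; done) | tauto

lemma delta_eSeq (k : ℕ) : delta (eSeq k) = eSeq k - eSeq (k + 1) := by
  funext n
  rcases n with _ | m <;>
    simp only [delta, eSeq, Pi.sub_apply, Nat.add_sub_cancel, Nat.succ_ne_zero, if_false,
      reduceIte, sub_zero] <;>
    split_ifs <;> first | omega | (exfalso; omega) | (norm_num; done) | tauto

/-- The element `b^{(k+1)}` of `bv_p`. -/
def bvB (p : ℝ≥0∞) [Fact (1 ≤ p)] (k : ℕ) : bv p :=
  ⟨bSeq k, show Memℓp (delta (bSeq k)) p by rw [delta_bSeq]; exact memℓp_eSeq p k⟩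

/-- The element `e^{(k+1)}` of `bv_p`. -/
def bvE (p : ℝ≥0∞) [Fact (1 ≤ p)] (k : ℕ) : bv p :=
  ⟨eSeq k, show Memℓp (delta (eSeq k)) p by
    rw [delta_eSeq]; exact (memℓp_eSeq p k).sub (memℓp_eSeq p (k + 1))⟩


namespace bv

lemma norm_def' {p : ℝ≥0∞} [Fact (1 ≤ p)] (x : bv p) : ‖x‖ = ‖toLp p x‖ := rfl

lemma coe_toLp {p : ℝ≥0∞} [Fact (1 ≤ p)] (x : bv p) (k : ℕ) :
    (toLp p x : ℕ → ℂ) k = delta (seq x) k := rfl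

lemma toLp_surjective (p : ℝ≥0∞) [Fact (1 ≤ p)] : Function.Surjective (toLp p) := by
  intro y
  have h2 : delta (deltaL.symm (y : ℕ → ℂ)) = (y : ℕ → ℂ) := deltaL.apply_symm_apply _
  have hy : Memℓp (delta (deltaL.symm (y : ℕ → ℂ))) p := by rw [h2]; exact lp.memℓp y
  refine ⟨⟨deltaL.symm (y : ℕ → ℂ), hy⟩, ?_⟩
  ext n
  show delta (deltaL.symm (y : ℕ → ℂ)) n = (y : ℕ → ℂ) n
  rw [h2]

/-- `bv p` is isometrically isomorphic to `ℓ^p`. -/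
def iso (p : ℝ≥0∞) [Fact (1 ≤ p)] : bv p ≃ₗᵢ[ℂ] lp (fun _ : ℕ => ℂ) p :=
  { LinearEquiv.ofBijective (toLp p) ⟨toLp_injective p, toLp_surjective p⟩ with
    norm_map' := fun _ => rfl }

lemma toLp_smul_bvB (p : ℝ≥0∞) [Fact (1 ≤ p)] (c : ℂ) (k : ℕ) :
    toLp p (c • bvB p k) = lp.single p k c := by
  ext n
  show delta (seq (c • bvB p k)) n = _
  have h1 : seq (c • bvB p k) = c • bSeq k := rfl
  have h2 : delta (c • bSeq k) = c • eSeq k := by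
    rw [show delta (c • bSeq k) = c • delta (bSeq k) from map_smul deltaL c (bSeq k), delta_bSeq]
  rw [h1, h2]
  rcases eq_or_ne n k with rfl | hn
  · simp [eSeq, lp.single_apply_self]
  · simp [eSeq, lp.single_apply, hn]

lemma hasSum_expansion {p : ℝ≥0∞} [Fact (1 ≤ p)] (hp : p ≠ ⊤) (x : bv p) :
    HasSum (fun k => delta (seq x) k • bvB p k) x := by
  set e := (iso p).toContinuousLinearEquiv with he
  have key : HasSum (fun k => e (delta (seq x) k • bvB p k)) (e x) := by
    have h1 : (fun k => e (delta (seq x) k • bvB p k)) =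
        fun k => lp.single p k ((toLp p x : ℕ → ℂ) k) := by
      funext k
      show toLp p (delta (seq x) k • bvB p k) = _
      rw [toLp_smul_bvB, coe_toLp]
    rw [h1]
    exact lp.hasSum_single hp (toLp p x)
  have := e.hasSum.mp key
  simpa using this

end bv

/-- For conjugate exponents `1 < p, q < ∞`, a linear functional `f` on
`bv_p` is continuous iff there is `a ∈ l_q` with `f x = ∑_{k=1}^∞ a_k (x_k - x_{k-1})`
for all `x ∈ bv_p`. -/
theorem bvp_continuous_iff_repr (p q : ℝ) (hp : 1 < p) (hq : 1 < q)
    (hpq : 1 / p + 1 / q = 1) [Fact (1 ≤ ENNReal.ofReal p)]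
    (f : bv (ENNReal.ofReal p) →ₗ[ℂ] ℂ) :
    Continuous f ↔
      ∃ a : ℕ → ℂ, (Summable fun k => ‖a k‖ ^ q) ∧
        ∀ x : bv (ENNReal.ofReal p), HasSum (fun k => a k * delta (bv.seq x) k) (f x) := by
  have hp0 : (0:ℝ) < p := lt_trans one_pos hp
  have hq0 : (0:ℝ) < q := lt_trans one_pos hq
  have hPt : (ENNReal.ofReal p).toReal = p := ENNReal.toReal_ofReal hp0.le
  have hPtop : (ENNReal.ofReal p) ≠ ⊤ := ENNReal.ofReal_ne_top
  have hconj : q.HolderConjugate p := Real.holderConjugate_iff.mpr ⟨hq, by rw [← one_div, ← one_div]; linarith⟩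
  constructor
  · intro hf
    set F : bv (ENNReal.ofReal p) →L[ℂ] ℂ := ⟨f, hf⟩ with hF
    set a : ℕ → ℂ := fun k => f (bvB (ENNReal.ofReal p) k) with ha
    set c : ℕ → ℂ := fun k => ((‖a k‖ ^ (q - 2) : ℝ) : ℂ) * (starRingEnd ℂ) (a k) with hc
    have hnormc : ∀ k, ‖c k‖ = ‖a k‖ ^ (q - 1) := by
      intro k
      rcases eq_or_ne (a k) 0 with h0 | h0
      · simp [hc, h0, Real.zero_rpow (by intro h; linarith : q - 1 ≠ 0)]
      · have hpos : 0 < ‖a k‖ := norm_pos_iff.mpr h0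
        simp only [hc, norm_mul, Complex.norm_real, RCLike.norm_conj, Real.norm_eq_abs,
          abs_of_nonneg (Real.rpow_nonneg (norm_nonneg (a k)) (q - 2))]
        rw [← Real.rpow_add_one hpos.ne']
        ring_nf
    have hca : ∀ k, c k * a k = ((‖a k‖ ^ q : ℝ) : ℂ) := by
      intro k
      rcases eq_or_ne (a k) 0 with h0 | h0
      · simp [hc, h0, Real.zero_rpow hq0.ne']
      · have hpos : 0 < ‖a k‖ := norm_pos_iff.mpr h0
        have h2 : (Complex.normSq (a k) : ℝ) = ‖a k‖ ^ ((2:ℕ):ℝ) := by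
          rw [Real.rpow_natCast, Complex.normSq_eq_norm_sq]
        rw [hc, mul_assoc, ← Complex.normSq_eq_conj_mul_self, ← Complex.ofReal_mul]
        congr 1
        rw [h2, ← Real.rpow_add hpos]
        norm_num
    have hqp : (q - 1) * p = q := by
      have h1 : p ≠ 0 := hp0.ne'
      have h2 : q ≠ 0 := hq0.ne'
      field_simp at hpq
      nlinarith [hpq]
    have key : ∀ N : ℕ, ∑ k ∈ Finset.range N, ‖a k‖ ^ q ≤ ‖F‖ ^ q := by
      intro N
      set S := ∑ k ∈ Finset.range N, ‖a k‖ ^ q with hS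
      have hS0 : 0 ≤ S := Finset.sum_nonneg fun k _ => Real.rpow_nonneg (norm_nonneg _) q
      set xN : bv (ENNReal.ofReal p) := ∑ k ∈ Finset.range N, c k • bvB (ENNReal.ofReal p) k
        with hxN
      have hfx : f xN = ((S:ℝ):ℂ) := by
        rw [hxN, map_sum, hS]
        push_cast
        refine Finset.sum_congr rfl fun k _ => ?_
        rw [map_smul, smul_eq_mul, hca k]
      have hnormx : ‖xN‖ ^ p = S := by
        have h1 : bv.toLp (ENNReal.ofReal p) xN =
            ∑ k ∈ Finset.range N, lp.single (ENNReal.ofReal p) k ((fun i => c i) k) := by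
          rw [hxN, map_sum]
          exact Finset.sum_congr rfl fun k _ => bv.toLp_smul_bvB (ENNReal.ofReal p) (c k) k
        have h2 := lp.norm_sum_single (p := ENNReal.ofReal p) (by rw [hPt]; exact hp0)
          (fun i => c i) (Finset.range N)
        rw [hPt] at h2
        rw [bv.norm_def', h1, h2, hS]
        refine Finset.sum_congr rfl fun k _ => ?_
        rw [hnormc k, ← Real.rpow_mul (norm_nonneg _), hqp]
      have hxnorm' : ‖xN‖ = S ^ (1/p) := by
        rw [← hnormx, ← Real.rpow_mul (norm_nonneg xN), mul_one_div, div_self hp0.ne',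
          Real.rpow_one]
      have hb : S ≤ ‖F‖ * S ^ (1/p) := by
        have h3 : ‖f xN‖ = S := by rw [hfx, Complex.norm_real, Real.norm_eq_abs,
          abs_of_nonneg hS0]
        have h4 : ‖F xN‖ ≤ ‖F‖ * ‖xN‖ := F.le_opNorm xN
        have h5 : F xN = f xN := rfl
        rw [h5, h3, hxnorm'] at h4
        exact h4
      rcases eq_or_lt_of_le hS0 with h0 | h0
      · rw [← h0]; exact Real.rpow_nonneg (norm_nonneg _) q
      · have hsplit : S = S ^ (1/p) * S ^ (1/q) := by
          rw [← Real.rpow_add h0, hpq, Real.rpow_one]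
        have hppos : 0 < S ^ (1/p) := Real.rpow_pos_of_pos h0 _
        have hs1 : S ^ (1/q) ≤ ‖F‖ := by
          have hb' : S ^ (1/q) * S ^ (1/p) ≤ ‖F‖ * S ^ (1/p) := by
            rw [mul_comm (S ^ (1/q)), ← hsplit]; exact hb
          exact le_of_mul_le_mul_right hb' hppos
        calc S = (S ^ (1/q)) ^ q := by
              rw [← Real.rpow_mul h0.le, one_div, inv_mul_cancel₀ hq0.ne', Real.rpow_one]
          _ ≤ ‖F‖ ^ q := Real.rpow_le_rpow (Real.rpow_nonneg h0.le _) hs1 hq0.le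
    have hsumq : Summable fun k => ‖a k‖ ^ q :=
      summable_of_sum_range_le (fun n => Real.rpow_nonneg (norm_nonneg _) q) key
    refine ⟨a, hsumq, fun x => ?_⟩
    have hx := bv.hasSum_expansion hPtop x
    have h6 := hx.mapL F
    have h7 : (fun k => F (delta (bv.seq x) k • bvB (ENNReal.ofReal p) k)) =
        fun k => a k * delta (bv.seq x) k := by
      funext k
      show f (delta (bv.seq x) k • bvB (ENNReal.ofReal p) k) = _
      rw [map_smul, smul_eq_mul, mul_comm]
    rw [h7] at h6
    exact h6
  · rintro ⟨a, haq, hrep⟩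
    have hQt : (ENNReal.ofReal q).toReal = q := ENNReal.toReal_ofReal hq0.le
    have hconj2 : (ENNReal.ofReal q).toReal.HolderConjugate (ENNReal.ofReal p).toReal := by
      rw [hQt, hPt]; exact hconj
    have haQ : Memℓp a (ENNReal.ofReal q) := memℓp_gen (by rw [hQt]; exact haq)
    set g : lp (fun _ : ℕ => ℂ) (ENNReal.ofReal q) := ⟨a, haQ⟩ with hg
    apply AddMonoidHomClass.continuous_of_bound f ‖g‖
    intro x
    have hsm : Summable fun k => ‖a k‖ * ‖delta (bv.seq x) k‖ :=
      lp.summable_mul hconj2 g (bv.toLp (ENNReal.ofReal p) x)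
    have h1 := (hrep x).tsum_eq
    calc ‖f x‖ = ‖∑' k, a k * delta (bv.seq x) k‖ := by rw [h1]
      _ ≤ ∑' k, ‖a k * delta (bv.seq x) k‖ :=
          norm_tsum_le_tsum_norm (by simpa [norm_mul] using hsm)
      _ = ∑' k, ‖a k‖ * ‖delta (bv.seq x) k‖ := by simp [norm_mul]
      _ ≤ ‖g‖ * ‖bv.toLp (ENNReal.ofReal p) x‖ :=
          lp.tsum_mul_le_mul_norm' hconj2 g (bv.toLp (ENNReal.ofReal p) x)
      _ = ‖g‖ * ‖x‖ := rfl
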